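/- Let P₁, P₂, P₃ be elements of a complex Banach algebra satisfying [P₁,P₂] + [P₁,P₃] + [P₂,P₃] = 0, set 𝓛 = P₁ + P₂ + P₃ and E(t) = exp(tP₁)·exp(tP₂)·exp(tP₃) − exp(t𝓛). Assume moreover that ‖exp(sP₁)‖ ≤ 1, ‖exp(sP₂)‖ ≤ 1, ‖exp(sP₃)‖ ≤ 1, ‖exp(s𝓛)‖ ≤ 1 and, for the conjugations appearing in the error formula, ‖exp(sP₁)·X·exp(−sP₁)‖ ≤ ‖X‖ and ‖exp(sP₂)·X·exp(−sP₂)‖ ≤ ‖X‖ for all s ≥ 0 and all X ∈ 𝒜 (as holds when all exponentials are isometries, e.g. unitary groups on a Hilbert space). Then for every t ≥ 0, ‖E(t)‖ ≤ (t³/6)·(‖[P₁,[P₂,P₃]]‖ + ‖[P₂,[P₂,P₃]]‖). -/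

import Mathlib

open NormedSpace intervalIntegral MeasureTheory

namespace SplitAux

variable {𝒜 : Type*} [NormedRing 𝒜] [NormedAlgebra ℂ 𝒜] [CompleteSpace 𝒜]

noncomputable def ee (P : 𝒜) (s : ℝ) : 𝒜 := exp ((s : ℂ) • P)

noncomputable def cj (P X : 𝒜) (s : ℝ) : 𝒜 := ee P s * X * exp (-((s : ℂ) • P))

lemma ee_zero (P : 𝒜) : ee P 0 = 1 := by simp [ee, exp_zero]

lemma ee_mul_neg (P : 𝒜) (s : ℝ) : ee P s * exp (-((s : ℂ) • P)) = 1 := by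
  rw [ee, ← exp_add_of_commute_of_mem_ball (𝕂 := ℂ) (Commute.neg_right (Commute.refl _))
    (by rw [expSeries_radius_eq_top ℂ 𝒜]; simp) (by rw [expSeries_radius_eq_top ℂ 𝒜]; simp)]
  simp [exp_zero]

lemma neg_mul_ee (P : 𝒜) (s : ℝ) : exp (-((s : ℂ) • P)) * ee P s = 1 := by
  rw [ee, ← exp_add_of_commute_of_mem_ball (𝕂 := ℂ) (Commute.neg_left (Commute.refl _))
    (by rw [expSeries_radius_eq_top ℂ 𝒜]; simp) (by rw [expSeries_radius_eq_top ℂ 𝒜]; simp)]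
  simp [exp_zero]

lemma cj_zero (P X : 𝒜) : cj P X 0 = X := by simp [cj, ee, exp_zero]

lemma hasDerivAt_ee (P : 𝒜) (s : ℝ) : HasDerivAt (ee P) (ee P s * P) s := by
  have hg := hasDerivAt_exp_smul_const P ((s : ℝ) : ℂ)
  have hf : HasDerivAt (fun u : ℝ => (u : ℂ)) 1 s := Complex.ofRealCLM.hasDerivAt
  have h := HasDerivAt.scomp s hg hf
  simp only [Function.comp_def, one_smul] at h
  exact h

lemma hasDerivAt_ee' (P : 𝒜) (s : ℝ) : HasDerivAt (ee P) (P * ee P s) s := by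
  have hg := hasDerivAt_exp_smul_const' P ((s : ℝ) : ℂ)
  have hf : HasDerivAt (fun u : ℝ => (u : ℂ)) 1 s := Complex.ofRealCLM.hasDerivAt
  have h := HasDerivAt.scomp s hg hf
  simp only [Function.comp_def, one_smul] at h
  exact h

lemma continuous_ee (P : 𝒜) : Continuous (ee P) :=
  (continuous_iff_continuousAt.2 fun x => (exp_analytic (𝕂 := ℂ) x).continuousAt).comp (Complex.continuous_ofReal.smul continuous_const)

lemma ee_neg_eq (P : 𝒜) (s : ℝ) : exp (-((s : ℂ) • P)) = ee (-P) s := by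
  simp [ee]

lemma continuous_cj (P X : 𝒜) : Continuous (cj P X) := by
  have : Continuous fun s : ℝ => exp (-((s : ℂ) • P)) := by
    simp only [ee_neg_eq]; exact continuous_ee (-P)
  exact ((continuous_ee P).mul continuous_const).mul this

lemma hasDerivAt_cj (P X : 𝒜) (s : ℝ) :
    HasDerivAt (cj P X) (cj P (P * X - X * P) s) s := by
  have h1 : HasDerivAt (fun u : ℝ => ee P u * X) (P * ee P s * X) s :=
    (hasDerivAt_ee' P s).mul_const X
  have h2 : HasDerivAt (fun u : ℝ => exp (-((u : ℂ) • P))) (ee (-P) s * (-P)) s := by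
    simp only [ee_neg_eq]; exact hasDerivAt_ee (-P) s
  have h := h1.mul h2
  convert h using 1
  · rfl
  have hy : Commute P ((s : ℂ) • P) := by
    show P * ((s : ℂ) • P) = ((s : ℂ) • P) * P
    rw [mul_smul_comm, smul_mul_assoc]
  have hc : Commute P (ee (-P) s) := by
    have := (hy.neg_right).exp_right
    rwa [ee_neg_eq] at this
  have hc1 : Commute P (ee P s) := hy.exp_right
  rw [cj, ee_neg_eq, hc1.eq, mul_neg, ← hc.eq]
  noncomm_ring


lemma cj_mul_ee (P X : 𝒜) (s : ℝ) : cj P X s * ee P s = ee P s * X := by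
  rw [cj, mul_assoc, neg_mul_ee, mul_one]

omit [CompleteSpace 𝒜] in
lemma cj_add (P X Y : 𝒜) (s : ℝ) : cj P (X + Y) s = cj P X s + cj P Y s := by
  simp only [cj]; noncomm_ring

omit [CompleteSpace 𝒜] in
lemma cj_sub (P X Y : 𝒜) (s : ℝ) : cj P (X - Y) s = cj P X s - cj P Y s := by
  simp only [cj]; noncomm_ring

omit [CompleteSpace 𝒜] in
lemma cj_neg (P X : 𝒜) (s : ℝ) : cj P (-X) s = -cj P X s := by
  simp only [cj]; noncomm_ring

lemma cj_integral (P X : 𝒜) (τ s : ℝ) :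
    (∫ ρ in τ..s, cj P (P * X - X * P) ρ) = cj P X s - cj P X τ :=
  intervalIntegral.integral_eq_sub_of_hasDerivAt (fun ρ _ => hasDerivAt_cj P X ρ)
    ((continuous_cj P _).intervalIntegrable τ s)

lemma norm_cj_sub_le (P X : 𝒜)
    (hconj : ∀ u : ℝ, 0 ≤ u → ∀ Y : 𝒜, ‖cj P Y u‖ ≤ ‖Y‖)
    {τ s : ℝ} (hτ : 0 ≤ τ) (hs : τ ≤ s) :
    ‖cj P X s - cj P X τ‖ ≤ (s - τ) * ‖P * X - X * P‖ := by
  rw [← cj_integral]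
  have h := intervalIntegral.norm_integral_le_of_norm_le_const
    (f := fun ρ => cj P (P * X - X * P) ρ) (a := τ) (b := s) (C := ‖P * X - X * P‖) ?_
  · calc ‖∫ ρ in τ..s, cj P (P * X - X * P) ρ‖ ≤ ‖P * X - X * P‖ * |s - τ| := h
      _ = (s - τ) * ‖P * X - X * P‖ := by
          rw [abs_of_nonneg (by linarith), mul_comm]
  · intro ρ hρ
    rw [Set.uIoc_of_le hs] at hρ
    exact hconj ρ (le_of_lt (lt_of_le_of_lt hτ hρ.1)) _

lemma continuous_cj_outer (P Q X : 𝒜) (s : ℝ) :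
    Continuous fun τ : ℝ => cj P (cj Q X τ) s := by
  show Continuous fun τ : ℝ => ee P s * cj Q X τ * exp (-((s : ℂ) • P))
  exact (continuous_const.mul (continuous_cj Q X)).mul continuous_const

lemma F_eq (P₁ P₂ P₃ : 𝒜)
    (hcond : (P₁ * P₂ - P₂ * P₁) + (P₁ * P₃ - P₃ * P₁) + (P₂ * P₃ - P₃ * P₂) = 0)
    (s : ℝ) :
    cj P₁ (P₂ + cj P₂ P₃ s) s - (P₂ + P₃)
      = ∫ τ in (0:ℝ)..s,
          (cj P₁ (cj P₂ (P₂ * P₃ - P₃ * P₂) τ) s - cj P₁ (P₂ * P₃ - P₃ * P₂) τ) := by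
  set C : 𝒜 := P₂ * P₃ - P₃ * P₂ with hC
  have h2 : cj P₂ P₃ s - P₃ = ∫ τ in (0:ℝ)..s, cj P₂ C τ := by
    simpa [cj_zero] using (cj_integral P₂ P₃ 0 s).symm
  have hcomm : P₁ * (P₂ + P₃) - (P₂ + P₃) * P₁ = -C := by
    have h : P₁ * (P₂ + P₃) - (P₂ + P₃) * P₁
        = ((P₁ * P₂ - P₂ * P₁) + (P₁ * P₃ - P₃ * P₁) + (P₂ * P₃ - P₃ * P₂))
          - (P₂ * P₃ - P₃ * P₂) := by noncomm_ring
    rw [h, hcond, zero_sub]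
  have h1 : cj P₁ (P₂ + P₃) s - (P₂ + P₃) = -∫ τ in (0:ℝ)..s, cj P₁ C τ := by
    have h := cj_integral P₁ (P₂ + P₃) 0 s
    rw [hcomm] at h
    simp only [cj_neg, cj_zero] at h
    rw [intervalIntegral.integral_neg] at h
    exact h.symm
  have decomp : cj P₁ (P₂ + cj P₂ P₃ s) s
      = cj P₁ (P₂ + P₃) s + cj P₁ (cj P₂ P₃ s - P₃) s := by
    have h : P₂ + cj P₂ P₃ s = (P₂ + P₃) + (cj P₂ P₃ s - P₃) := by abel
    rw [h, cj_add]
  have pull : cj P₁ (∫ τ in (0:ℝ)..s, cj P₂ C τ) s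
      = ∫ τ in (0:ℝ)..s, cj P₁ (cj P₂ C τ) s := by
    have hL := (ContinuousLinearMap.mulLeftRight ℝ 𝒜 (ee P₁ s)
        (exp (-((s : ℂ) • P₁)))).intervalIntegral_comp_comm
      ((continuous_cj P₂ C).intervalIntegrable (μ := MeasureTheory.volume) 0 s)
    simpa [ContinuousLinearMap.mulLeftRight_apply, cj] using hL.symm
  have hf : IntervalIntegrable (fun τ : ℝ => cj P₁ (cj P₂ C τ) s)
      MeasureTheory.volume 0 s := (continuous_cj_outer P₁ P₂ C s).intervalIntegrable 0 s
  have hg : IntervalIntegrable (fun τ : ℝ => cj P₁ C τ) MeasureTheory.volume 0 s :=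
    (continuous_cj P₁ C).intervalIntegrable 0 s
  calc cj P₁ (P₂ + cj P₂ P₃ s) s - (P₂ + P₃)
      = (cj P₁ (P₂ + P₃) s - (P₂ + P₃)) + cj P₁ (cj P₂ P₃ s - P₃) s := by
        rw [decomp]; abel
    _ = -(∫ τ in (0:ℝ)..s, cj P₁ C τ) + ∫ τ in (0:ℝ)..s, cj P₁ (cj P₂ C τ) s := by
        rw [h1, h2, pull]
    _ = ∫ τ in (0:ℝ)..s, (cj P₁ (cj P₂ C τ) s - cj P₁ C τ) := by
        rw [intervalIntegral.integral_sub hf hg]; abel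

lemma norm_F_le (P₁ P₂ P₃ : 𝒜)
    (hcond : (P₁ * P₂ - P₂ * P₁) + (P₁ * P₃ - P₃ * P₁) + (P₂ * P₃ - P₃ * P₂) = 0)
    (hconj1 : ∀ u : ℝ, 0 ≤ u → ∀ Y : 𝒜, ‖cj P₁ Y u‖ ≤ ‖Y‖)
    (hconj2 : ∀ u : ℝ, 0 ≤ u → ∀ Y : 𝒜, ‖cj P₂ Y u‖ ≤ ‖Y‖)
    {s : ℝ} (hs : 0 ≤ s) :
    ‖cj P₁ (P₂ + cj P₂ P₃ s) s - (P₂ + P₃)‖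
      ≤ s ^ 2 / 2 * (‖P₁ * (P₂ * P₃ - P₃ * P₂) - (P₂ * P₃ - P₃ * P₂) * P₁‖
          + ‖P₂ * (P₂ * P₃ - P₃ * P₂) - (P₂ * P₃ - P₃ * P₂) * P₂‖) := by
  set C : 𝒜 := P₂ * P₃ - P₃ * P₂ with hC
  set K₁ : ℝ := ‖P₁ * C - C * P₁‖ with hK₁
  set K₂ : ℝ := ‖P₂ * C - C * P₂‖ with hK₂
  rw [F_eq P₁ P₂ P₃ hcond s]
  have hbound : IntervalIntegrable (fun τ : ℝ => K₂ * τ + K₁ * (s - τ))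
      MeasureTheory.volume 0 s := by
    apply Continuous.intervalIntegrable; continuity
  have hae : ∀ᵐ τ ∂(MeasureTheory.volume.restrict (Set.uIoc (0:ℝ) s)),
      ‖cj P₁ (cj P₂ C τ) s - cj P₁ C τ‖ ≤ K₂ * τ + K₁ * (s - τ) := by
    refine (MeasureTheory.ae_restrict_mem measurableSet_uIoc).mono (fun τ hτ => ?_)
    rw [Set.uIoc_of_le hs] at hτ
    obtain ⟨hτ0, hτs⟩ := hτ
    have hτ0' : (0:ℝ) ≤ τ := le_of_lt hτ0
    have e1 : cj P₁ (cj P₂ C τ) s - cj P₁ C τ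
        = cj P₁ (cj P₂ C τ - C) s + (cj P₁ C s - cj P₁ C τ) := by
      rw [cj_sub P₁ (cj P₂ C τ) C s]; abel
    have b1 : ‖cj P₁ (cj P₂ C τ - C) s‖ ≤ ‖cj P₂ C τ - C‖ := hconj1 s hs _
    have b2 : ‖cj P₁ C s - cj P₁ C τ‖ ≤ (s - τ) * K₁ :=
      norm_cj_sub_le P₁ C hconj1 hτ0' hτs
    have b3 : ‖cj P₂ C τ - C‖ ≤ τ * K₂ := by
      have := norm_cj_sub_le P₂ C hconj2 (le_refl (0:ℝ)) hτ0'
      simpa [cj_zero] using this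
    calc ‖cj P₁ (cj P₂ C τ) s - cj P₁ C τ‖
        ≤ ‖cj P₁ (cj P₂ C τ - C) s‖ + ‖cj P₁ C s - cj P₁ C τ‖ := by
          rw [e1]; exact norm_add_le _ _
      _ ≤ τ * K₂ + (s - τ) * K₁ := add_le_add (le_trans b1 b3) b2
      _ = K₂ * τ + K₁ * (s - τ) := by ring
  have hint : (∫ τ in (0:ℝ)..s, (K₂ * τ + K₁ * (s - τ))) = s ^ 2 / 2 * (K₁ + K₂) := by
    have hder : ∀ τ ∈ Set.uIcc (0:ℝ) s,
        HasDerivAt (fun τ : ℝ => K₂ * (τ ^ 2 / 2) + K₁ * (s * τ - τ ^ 2 / 2))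
          (K₂ * τ + K₁ * (s - τ)) τ := by
      intro τ _
      have h1 : HasDerivAt (fun τ : ℝ => τ ^ 2 / 2) τ τ := by
        simpa using (hasDerivAt_pow 2 τ).div_const 2
      have h2 : HasDerivAt (fun τ : ℝ => s * τ) s τ := by
        simpa using (hasDerivAt_id τ).const_mul s
      exact (h1.const_mul K₂).add ((h2.sub h1).const_mul K₁)
    rw [intervalIntegral.integral_eq_sub_of_hasDerivAt hder
      ((by continuity : Continuous fun τ : ℝ => K₂ * τ + K₁ * (s - τ)).intervalIntegrable 0 s)]
    ring
  calc ‖∫ τ in (0:ℝ)..s, (cj P₁ (cj P₂ C τ) s - cj P₁ C τ)‖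
      ≤ |∫ τ in (0:ℝ)..s, (K₂ * τ + K₁ * (s - τ))| :=
        intervalIntegral.norm_integral_le_abs_of_norm_le hae hbound
    _ = s ^ 2 / 2 * (K₁ + K₂) := by
        rw [hint, abs_of_nonneg (by positivity)]

lemma ee_comm (P : 𝒜) (s : ℝ) : ee P s * P = P * ee P s := by
  have hy : Commute P ((s : ℂ) • P) := by
    show P * ((s : ℂ) • P) = ((s : ℂ) • P) * P
    rw [mul_smul_comm, smul_mul_assoc]
  exact ((hy.exp_right).symm).eq

end SplitAux

open SplitAux

set_option maxHeartbeats 1000000 in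
/-- error bound \R{eq:3.5}: under the second-order condition and the
contractivity assumptions `‖exp(sPℓ)‖ ≤ 1`, `‖exp(s𝓛)‖ ≤ 1` and
`‖exp(sPℓ)·X·exp(−sPℓ)‖ ≤ ‖X‖` (`ℓ = 1, 2`) for all `s ≥ 0`, the splitting error satisfies
`‖E(t)‖ ≤ (t³/6)(‖[P₁,[P₂,P₃]]‖ + ‖[P₂,[P₂,P₃]]‖)` for all `t ≥ 0`. -/
theorem splitting_error_bound {𝒜 : Type*} [NormedRing 𝒜] [NormedAlgebra ℂ 𝒜]
    [CompleteSpace 𝒜] (P₁ P₂ P₃ : 𝒜) (𝓛 : 𝒜) (h𝓛 : 𝓛 = P₁ + P₂ + P₃)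
    (hcond : (P₁ * P₂ - P₂ * P₁) + (P₁ * P₃ - P₃ * P₁) + (P₂ * P₃ - P₃ * P₂) = 0)
    (h1 : ∀ s : ℝ, 0 ≤ s → ‖exp ((s : ℂ) • P₁)‖ ≤ 1)
    (h2 : ∀ s : ℝ, 0 ≤ s → ‖exp ((s : ℂ) • P₂)‖ ≤ 1)
    (h3 : ∀ s : ℝ, 0 ≤ s → ‖exp ((s : ℂ) • P₃)‖ ≤ 1)
    (hL : ∀ s : ℝ, 0 ≤ s → ‖exp ((s : ℂ) • 𝓛)‖ ≤ 1)
    (hconj1 : ∀ s : ℝ, 0 ≤ s → ∀ X : 𝒜,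
      ‖exp ((s : ℂ) • P₁) * X * exp (-((s : ℂ) • P₁))‖ ≤ ‖X‖)
    (hconj2 : ∀ s : ℝ, 0 ≤ s → ∀ X : 𝒜,
      ‖exp ((s : ℂ) • P₂) * X * exp (-((s : ℂ) • P₂))‖ ≤ ‖X‖) :
    ∀ t : ℝ, 0 ≤ t →
      ‖exp ((t : ℂ) • P₁) * exp ((t : ℂ) • P₂) * exp ((t : ℂ) • P₃)
          - exp ((t : ℂ) • 𝓛)‖
        ≤ t ^ 3 / 6 * (‖P₁ * (P₂ * P₃ - P₃ * P₂) - (P₂ * P₃ - P₃ * P₂) * P₁‖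
            + ‖P₂ * (P₂ * P₃ - P₃ * P₂) - (P₂ * P₃ - P₃ * P₂) * P₂‖) := by
  intro t ht
  have hconj1' : ∀ u : ℝ, 0 ≤ u → ∀ Y : 𝒜, ‖cj P₁ Y u‖ ≤ ‖Y‖ := by
    intro u hu Y; simpa [cj, ee] using hconj1 u hu Y
  have hconj2' : ∀ u : ℝ, 0 ≤ u → ∀ Y : 𝒜, ‖cj P₂ Y u‖ ≤ ‖Y‖ := by
    intro u hu Y; simpa [cj, ee] using hconj2 u hu Y
  set K₁ : ℝ := ‖P₁ * (P₂ * P₃ - P₃ * P₂) - (P₂ * P₃ - P₃ * P₂) * P₁‖ with hK₁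
  set K₂ : ℝ := ‖P₂ * (P₂ * P₃ - P₃ * P₂) - (P₂ * P₃ - P₃ * P₂) * P₂‖ with hK₂
  set A : ℝ → 𝒜 := fun s => ee P₁ s * ee P₂ s * ee P₃ s with hA
  set Fn : ℝ → 𝒜 := fun s => cj P₁ (P₂ + cj P₂ P₃ s) s - (P₂ + P₃) with hFn
  set g : ℝ → 𝒜 := fun s => ee 𝓛 (t - s) * A s with hg
  -- the key algebraic identity
  have hkey : ∀ s : ℝ, ee 𝓛 (t - s) * (Fn s * A s)
      = -(ee 𝓛 (t - s) * 𝓛) * A s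
        + ee 𝓛 (t - s) * ((P₁ * ee P₁ s * ee P₂ s + ee P₁ s * (ee P₂ s * P₂)) * ee P₃ s
            + ee P₁ s * ee P₂ s * (ee P₃ s * P₃)) := by
    intro s
    have hFA : Fn s * A s
        = ((P₁ * ee P₁ s * ee P₂ s + ee P₁ s * (ee P₂ s * P₂)) * ee P₃ s
            + ee P₁ s * ee P₂ s * (ee P₃ s * P₃)) - 𝓛 * A s := by
      simp only [hFn, hA, h𝓛]
      have e1 : (cj P₁ (P₂ + cj P₂ P₃ s) s - (P₂ + P₃)) * (ee P₁ s * ee P₂ s * ee P₃ s)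
          = (cj P₁ (P₂ + cj P₂ P₃ s) s * ee P₁ s) * (ee P₂ s * ee P₃ s)
            - (P₂ + P₃) * (ee P₁ s * ee P₂ s * ee P₃ s) := by noncomm_ring
      rw [e1, cj_mul_ee]
      have e2 : ee P₁ s * (P₂ + cj P₂ P₃ s) * (ee P₂ s * ee P₃ s)
          = ee P₁ s * P₂ * (ee P₂ s * ee P₃ s)
            + ee P₁ s * ((cj P₂ P₃ s * ee P₂ s) * ee P₃ s) := by noncomm_ring
      rw [e2, cj_mul_ee, ee_comm P₂ s, ee_comm P₃ s]
      noncomm_ring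
    rw [hFA]
    noncomm_ring
  have hgderiv : ∀ s ∈ Set.uIcc (0:ℝ) t, HasDerivAt g (ee 𝓛 (t - s) * (Fn s * A s)) s := by
    intro s _
    have hinner : HasDerivAt (fun u : ℝ => t - u) (-1) s := (hasDerivAt_id s).const_sub t
    have hLp : HasDerivAt (fun u : ℝ => ee 𝓛 (t - u)) (-(ee 𝓛 (t - s) * 𝓛)) s := by
      have := HasDerivAt.scomp s (hasDerivAt_ee 𝓛 (t - s)) hinner
      simpa [Function.comp_def] using this
    have hAd : HasDerivAt A
        ((P₁ * ee P₁ s * ee P₂ s + ee P₁ s * (ee P₂ s * P₂)) * ee P₃ s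
          + ee P₁ s * ee P₂ s * (ee P₃ s * P₃)) s :=
      ((hasDerivAt_ee' P₁ s).mul (hasDerivAt_ee P₂ s)).mul (hasDerivAt_ee P₃ s)
    have h := hLp.mul hAd
    rw [hkey s]
    exact h
  -- continuity of the integrand
  have hnegc : Continuous fun s : ℝ => exp (-((s : ℂ) • P₁)) := by
    simp only [ee_neg_eq]; exact continuous_ee (-P₁)
  have hcontFn : Continuous Fn := by
    rw [hFn]
    show Continuous fun s : ℝ =>
      ee P₁ s * (P₂ + cj P₂ P₃ s) * exp (-((s : ℂ) • P₁)) - (P₂ + P₃)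
    exact (((continuous_ee P₁).mul (continuous_const.add (continuous_cj P₂ P₃))).mul
      hnegc).sub continuous_const
  have hcontA : Continuous A := ((continuous_ee P₁).mul (continuous_ee P₂)).mul (continuous_ee P₃)
  have hcontI : Continuous fun s : ℝ => ee 𝓛 (t - s) * (Fn s * A s) :=
    ((continuous_ee 𝓛).comp (continuous_const.sub continuous_id)).mul (hcontFn.mul hcontA)
  have hFTC : (∫ s in (0:ℝ)..t, ee 𝓛 (t - s) * (Fn s * A s)) = g t - g 0 :=
    intervalIntegral.integral_eq_sub_of_hasDerivAt hgderiv (hcontI.intervalIntegrable 0 t)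
  have hgt : g t = ee P₁ t * ee P₂ t * ee P₃ t := by
    simp [hg, hA, sub_self, ee_zero]
  have hg0 : g 0 = ee 𝓛 t := by
    simp [hg, hA, ee_zero]
  have hgoal : exp ((t : ℂ) • P₁) * exp ((t : ℂ) • P₂) * exp ((t : ℂ) • P₃)
      - exp ((t : ℂ) • 𝓛) = ∫ s in (0:ℝ)..t, ee 𝓛 (t - s) * (Fn s * A s) := by
    rw [hFTC, hgt, hg0]; rfl
  rw [hgoal]
  -- pointwise bound and integration
  have hbound : IntervalIntegrable (fun s : ℝ => s ^ 2 / 2 * (K₁ + K₂))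
      MeasureTheory.volume 0 t := by
    exact (((continuous_pow 2).div_const 2).mul continuous_const).intervalIntegrable 0 t
  have hae : ∀ᵐ s ∂(MeasureTheory.volume.restrict (Set.uIoc (0:ℝ) t)),
      ‖ee 𝓛 (t - s) * (Fn s * A s)‖ ≤ s ^ 2 / 2 * (K₁ + K₂) := by
    refine (MeasureTheory.ae_restrict_mem measurableSet_uIoc).mono (fun s hs => ?_)
    rw [Set.uIoc_of_le ht] at hs
    obtain ⟨hs0, hst⟩ := hs
    have hs0' : (0:ℝ) ≤ s := le_of_lt hs0
    have h5 : ‖ee 𝓛 (t - s)‖ ≤ 1 := hL (t - s) (by linarith)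
    have n1 : ‖ee P₁ s‖ ≤ 1 := h1 s hs0'
    have n2 : ‖ee P₂ s‖ ≤ 1 := h2 s hs0'
    have n3 : ‖ee P₃ s‖ ≤ 1 := h3 s hs0'
    have h6 : ‖A s‖ ≤ 1 := by
      calc ‖A s‖ ≤ ‖ee P₁ s * ee P₂ s‖ * ‖ee P₃ s‖ := norm_mul_le _ _
        _ ≤ (‖ee P₁ s‖ * ‖ee P₂ s‖) * ‖ee P₃ s‖ :=
            mul_le_mul_of_nonneg_right (norm_mul_le _ _) (norm_nonneg _)
        _ ≤ 1 :=
            mul_le_one₀ (mul_le_one₀ n1 (norm_nonneg _) n2) (norm_nonneg _) n3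
    have h7 : ‖Fn s‖ ≤ s ^ 2 / 2 * (K₁ + K₂) :=
      norm_F_le P₁ P₂ P₃ hcond hconj1' hconj2' hs0'
    calc ‖ee 𝓛 (t - s) * (Fn s * A s)‖
        ≤ ‖ee 𝓛 (t - s)‖ * (‖Fn s‖ * ‖A s‖) :=
          le_trans (norm_mul_le _ _)
            (mul_le_mul_of_nonneg_left (norm_mul_le _ _) (norm_nonneg _))
      _ ≤ 1 * (‖Fn s‖ * ‖A s‖) :=
          mul_le_mul_of_nonneg_right h5 (by positivity)
      _ = ‖Fn s‖ * ‖A s‖ := one_mul _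
      _ ≤ ‖Fn s‖ * 1 := mul_le_mul_of_nonneg_left h6 (norm_nonneg _)
      _ = ‖Fn s‖ := mul_one _
      _ ≤ s ^ 2 / 2 * (K₁ + K₂) := h7
  have hval : (∫ s in (0:ℝ)..t, s ^ 2 / 2 * (K₁ + K₂)) = t ^ 3 / 6 * (K₁ + K₂) := by
    have hc : ∀ s : ℝ, s ^ 2 / 2 * (K₁ + K₂) = ((K₁ + K₂) / 2) * s ^ 2 := fun s => by ring
    calc (∫ s in (0:ℝ)..t, s ^ 2 / 2 * (K₁ + K₂))
        = ∫ s in (0:ℝ)..t, ((K₁ + K₂) / 2) * s ^ 2 := by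
          exact intervalIntegral.integral_congr (fun s _ => hc s)
      _ = ((K₁ + K₂) / 2) * ∫ s in (0:ℝ)..t, s ^ 2 := by
          exact intervalIntegral.integral_const_mul _ _
      _ = t ^ 3 / 6 * (K₁ + K₂) := by
          rw [integral_pow]; ring
  calc ‖∫ s in (0:ℝ)..t, ee 𝓛 (t - s) * (Fn s * A s)‖
      ≤ |∫ s in (0:ℝ)..t, s ^ 2 / 2 * (K₁ + K₂)| :=
        intervalIntegral.norm_integral_le_abs_of_norm_le hae hbound
    _ = t ^ 3 / 6 * (K₁ + K₂) := by
        rw [hval, abs_of_nonneg (by positivity)]
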